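/- Let Γ be a set of subsets of a set A. The cardinality of the set {Pol(Q) : Q ⊆ DD(Γ)} of polymorphism clones of sets of relations disjunctively definable from Γ is at most the cardinality of the set of downsets of the poset (ℕ^Γ, ⊑). -/
import Mathlib


/-- The `n`-ary cross relation defined by the tuple `γ` of unary relations:
`{(x₁,…,xₙ) : x₁ ∈ γ₁ ∨ … ∨ xₙ ∈ γₙ}`. -/
def Cross {A : Type*} {n : ℕ} (γ : Fin n → Set A) : Set (Fin n → A) :=
  {x | ∃ i, x i ∈ γ i}

/-- A finitary relation on `A`: an arity together with a set of tuples. -/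
abbrev FinRel (A : Type*) := Σ n : ℕ, Set (Fin n → A)

/-- A `k`-ary operation `f` preserves an `n`-ary relation `ρ`. -/
def Preserves {A : Type*} {k n : ℕ} (f : (Fin k → A) → A) (ρ : Set (Fin n → A)) : Prop :=
  ∀ r : Fin k → Fin n → A, (∀ j, r j ∈ ρ) → (fun i => f fun j => r j i) ∈ ρ

/-- A finitary operation on `A` of positive arity `k + 1`. -/
abbrev Op (A : Type*) := Σ k : ℕ, (Fin (k + 1) → A) → A

/-- The polymorphism clone of a set of finitary relations. -/
def Pol {A : Type*} (Q : Set (FinRel A)) : Set (Op A) :=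
  {f | ∀ ρ ∈ Q, Preserves f.2 ρ.2}

/-- Relations disjunctively definable from the unary language `Γ`. -/
def DD {A : Type*} (Γ : Set (Set A)) : Set (FinRel A) :=
  {ρ | 1 ≤ ρ.1 ∧ ∃ γ : Fin ρ.1 → Set A, (∀ i, γ i ∈ Γ) ∧ ρ.2 = Cross γ}

/-- Support of a tuple of naturals. -/
def supp {I : Type*} (x : I → ℕ) : Set I := {i | x i ≠ 0}

/-- The order `⊑` on `ℕ^I`: pointwise `≤` together with equal supports. -/
def sle {I : Type*} (x y : I → ℕ) : Prop := (∀ i, x i ≤ y i) ∧ supp x = supp y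

/-- Downsets of the poset `(ℕ^I, ⊑)`. -/
def IsSleDownset {I : Type*} (X : Set (I → ℕ)) : Prop :=
  ∀ x ∈ X, ∀ y, sle y x → y ∈ X

open Classical in
/-- The canonical parameter tuple of a relation: the unique tuple of members of `Γ`
defining it as a cross if it is a proper subset of the full power, and `(A,…,A)` otherwise. -/
noncomputable def param {A : Type*} (Γ : Set (Set A)) (ρ : FinRel A) : Fin ρ.1 → Set A :=
  if ρ.2 = Set.univ then fun _ => Set.univ
  else if h : ∃ γ : Fin ρ.1 → Set A, (∀ i, γ i ∈ Γ) ∧ ρ.2 = Cross γ then h.choose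
  else fun _ => ∅

/-- The pattern of a relation: how often each `γ ∈ Γ` occurs in its canonical parameter. -/
noncomputable def pt {A : Type*} (Γ : Set (Set A)) (ρ : FinRel A) : ↥Γ → ℕ :=
  fun γ => Nat.card {i : Fin ρ.1 // param Γ ρ i = (γ : Set A)}

/-- The encoding map `I`: the downset of `(ℕ^Γ, ⊑)` generated by the patterns of `Q`. -/
def enc {A : Type*} (Γ : Set (Set A)) (Q : Set (FinRel A)) : Set (↥Γ → ℕ) :=
  {x | ∃ ρ ∈ Q, sle x (pt Γ ρ)}

/-- `F^Inv`: the relations in `DD Γ` preserved by every operation in `F`. -/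
def InvDD {A : Type*} (Γ : Set (Set A)) (F : Set (Op A)) : Set (FinRel A) :=
  {ρ | ρ ∈ DD Γ ∧ ∀ f ∈ F, Preserves f.2 ρ.2}

/- ### Auxiliary lemmas -/

lemma sle_refl {I : Type*} (x : I → ℕ) : sle x x := ⟨fun _ => le_rfl, rfl⟩

lemma sle_trans {I : Type*} {x y z : I → ℕ} (h1 : sle x y) (h2 : sle y z) : sle x z :=
  ⟨fun i => (h1.1 i).trans (h2.1 i), h1.2.trans h2.2⟩

lemma param_spec {A : Type*} (Γ : Set (Set A)) (ρ : FinRel A) (hρ : ρ ∈ DD Γ)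
    (hu : ρ.2 ≠ Set.univ) :
    (∀ i, param Γ ρ i ∈ Γ) ∧ ρ.2 = Cross (param Γ ρ) := by
  obtain ⟨-, h⟩ := hρ
  rw [param, if_neg hu, dif_pos h]
  exact ⟨h.choose_spec.1, h.choose_spec.2⟩

lemma param_univ {A : Type*} (Γ : Set (Set A)) (ρ : FinRel A) (hu : ρ.2 = Set.univ) :
    param Γ ρ = fun _ => Set.univ := by
  rw [param, if_pos hu]

lemma preserves_univ {A : Type*} {k n : ℕ} (f : (Fin k → A) → A) :
    Preserves f (Set.univ : Set (Fin n → A)) := fun _ _ => trivial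

/-- If `σ` is the full relation while `ρ` is not, their patterns are not related. -/
lemma not_sle_of_univ {A : Type*} (Γ : Set (Set A)) (ρ σ : FinRel A) (hρ : ρ ∈ DD Γ)
    (hρu : ρ.2 ≠ Set.univ) (hσu : σ.2 = Set.univ) (hle : sle (pt Γ ρ) (pt Γ σ)) : False := by
  obtain ⟨hΓ, hC⟩ := param_spec Γ ρ hρ hρu
  have hall : ∀ i : Fin ρ.1, param Γ ρ i = Set.univ := by
    intro i
    have h1 : pt Γ ρ ⟨param Γ ρ i, hΓ i⟩ ≠ 0 :=
      Nat.card_ne_zero.mpr ⟨⟨⟨i, rfl⟩⟩, inferInstance⟩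
    have h2 : (⟨param Γ ρ i, hΓ i⟩ : ↥Γ) ∈ supp (pt Γ σ) := by
      rw [← hle.2]; exact h1
    have h3 : Nonempty {i' : Fin σ.1 // param Γ σ i' = param Γ ρ i} :=
      (Nat.card_ne_zero.mp h2).1
    obtain ⟨i', hi'⟩ := h3
    rw [param_univ Γ σ hσu] at hi'
    exact hi'.symm
  apply hρu
  apply Set.eq_univ_of_forall
  intro x
  rw [hC]
  exact ⟨⟨0, hρ.1⟩, by rw [hall]; trivial⟩

/-- The key combinatorial step: a support- and multiplicity-compatible surjection. -/
lemma exists_surj {A : Type*} (Γ : Set (Set A)) (ρ σ : FinRel A)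
    (hρΓ : ∀ i, param Γ ρ i ∈ Γ) (hσΓ : ∀ i', param Γ σ i' ∈ Γ)
    (hle : sle (pt Γ ρ) (pt Γ σ)) :
    ∃ π : Fin σ.1 → Fin ρ.1, Function.Surjective π ∧ ∀ i', param Γ ρ (π i') = param Γ σ i' := by
  classical
  have claim : ∀ γ : Set A, ∃ s : {i' : Fin σ.1 // param Γ σ i' = γ} →
      {i : Fin ρ.1 // param Γ ρ i = γ}, Function.Surjective s := by
    intro γ
    by_cases hS : Nonempty {i : Fin ρ.1 // param Γ ρ i = γ}
    · obtain ⟨⟨i0, hi0⟩⟩ := hS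
      have hγΓ : γ ∈ Γ := hi0 ▸ hρΓ i0
      have h1 : pt Γ ρ ⟨γ, hγΓ⟩ ≠ 0 :=
        Nat.card_ne_zero.mpr ⟨⟨⟨i0, hi0⟩⟩, inferInstance⟩
      have hcard : pt Γ ρ ⟨γ, hγΓ⟩ ≤ pt Γ σ ⟨γ, hγΓ⟩ := hle.1 _
      have : Fintype {i : Fin ρ.1 // param Γ ρ i = γ} := Fintype.ofFinite _
      have : Fintype {i' : Fin σ.1 // param Γ σ i' = γ} := Fintype.ofFinite _
      have hc : Fintype.card {i : Fin ρ.1 // param Γ ρ i = γ}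
          ≤ Fintype.card {i' : Fin σ.1 // param Γ σ i' = γ} := by
        have := hcard
        simpa [pt, Nat.card_eq_fintype_card] using this
      obtain ⟨e⟩ := Function.Embedding.nonempty_of_card_le hc
      have : Nonempty {i : Fin ρ.1 // param Γ ρ i = γ} := ⟨⟨i0, hi0⟩⟩
      exact ⟨Function.invFun e, Function.invFun_surjective e.injective⟩
    · have hT : ¬ Nonempty {i' : Fin σ.1 // param Γ σ i' = γ} := by
        intro hT
        obtain ⟨⟨i0, hi0⟩⟩ := hT
        have hγΓ : γ ∈ Γ := hi0 ▸ hσΓ i0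
        have h1 : (⟨γ, hγΓ⟩ : ↥Γ) ∈ supp (pt Γ σ) :=
          Nat.card_ne_zero.mpr ⟨⟨⟨i0, hi0⟩⟩, inferInstance⟩
        rw [← hle.2] at h1
        exact hS (Nat.card_ne_zero.mp h1).1
      exact ⟨fun t => (hT ⟨t⟩).elim, fun i => (hS ⟨i⟩).elim⟩
  choose s hs using claim
  refine ⟨fun i' => (s (param Γ σ i') ⟨i', rfl⟩).val, ?_, ?_⟩
  · have key : ∀ (γ : Set A) (t : {i' : Fin σ.1 // param Γ σ i' = γ}),
        (s (param Γ σ t.val) ⟨t.val, rfl⟩).val = (s γ t).val := by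
      rintro γ ⟨tv, rfl⟩; rfl
    intro i
    obtain ⟨t, ht⟩ := hs (param Γ ρ i) ⟨i, rfl⟩
    exact ⟨t.val, (key (param Γ ρ i) t).trans (congrArg Subtype.val ht)⟩
  · intro i'
    exact (s (param Γ σ i') ⟨i', rfl⟩).2

/-- Transfer of preservation along the pattern order. -/
lemma transfer {A : Type*} (Γ : Set (Set A)) (ρ σ : FinRel A)
    (hρ : ρ ∈ DD Γ) (hσ : σ ∈ DD Γ) (hρu : ρ.2 ≠ Set.univ)
    (hle : sle (pt Γ ρ) (pt Γ σ)) {k : ℕ} (f : (Fin k → A) → A)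
    (hf : Preserves f σ.2) : Preserves f ρ.2 := by
  have hσu : σ.2 ≠ Set.univ := fun h => not_sle_of_univ Γ ρ σ hρ hρu h hle
  obtain ⟨hρΓ, hρC⟩ := param_spec Γ ρ hρ hρu
  obtain ⟨hσΓ, hσC⟩ := param_spec Γ σ hσ hσu
  obtain ⟨π, hπs, hπ⟩ := exists_surj Γ ρ σ hρΓ hσΓ hle
  intro r hr
  have hr' : ∀ j, (fun i' => r j (π i')) ∈ σ.2 := by
    intro j
    have := hr j
    rw [hρC] at this
    obtain ⟨i, hi⟩ := this
    obtain ⟨i', rfl⟩ := hπs i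
    rw [hσC]
    exact ⟨i', show r j (π i') ∈ param Γ σ i' from hπ i' ▸ hi⟩
  have := hf (fun j i' => r j (π i')) hr'
  rw [hσC] at this
  obtain ⟨i', hi'⟩ := this
  rw [hρC]
  exact ⟨π i', show f (fun j => r j (π i')) ∈ param Γ ρ (π i') from (hπ i').symm ▸ hi'⟩

lemma pol_anti {A : Type*} (Γ : Set (Set A)) {Q' Q'' : Set (FinRel A)}
    (hQ' : Q' ⊆ DD Γ) (hQ'' : Q'' ⊆ DD Γ) (h : enc Γ Q' ⊆ enc Γ Q'') :
    Pol Q'' ⊆ Pol Q' := by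
  intro f hf ρ hρQ'
  by_cases hu : ρ.2 = Set.univ
  · rw [hu]; exact preserves_univ _
  · obtain ⟨σ, hσQ'', hle⟩ := h ⟨ρ, hρQ', sle_refl _⟩
    exact transfer Γ ρ σ (hQ' hρQ') (hQ'' hσQ'') hu hle f.2 (hf σ hσQ'')

lemma pol_invDD {A : Type*} (Γ : Set (Set A)) {Q : Set (FinRel A)} (hQ : Q ⊆ DD Γ) :
    Pol (InvDD Γ (Pol Q)) = Pol Q := by
  ext f; constructor
  · intro hf ρ hρ; exact hf ρ ⟨hQ hρ, fun g hg => hg ρ hρ⟩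
  · intro hf ρ hρ; exact hρ.2 f hf

lemma enc_downset {A : Type*} (Γ : Set (Set A)) (Q : Set (FinRel A)) :
    IsSleDownset (enc Γ Q) := by
  rintro x ⟨ρ, hρ, hx⟩ y hy
  exact ⟨ρ, hρ, sle_trans hy hx⟩

/-- The number of polymorphism clones of sets of relations disjunctively definable
from `Γ` is at most the number of downsets of the poset `(ℕ^Γ, ⊑)`. -/
theorem mk_pol_le_mk_sle_downsets {A : Type*} (Γ : Set (Set A)) :
    Cardinal.mk {F : Set (Op A) | ∃ Q ⊆ DD Γ, F = Pol Q} ≤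
      Cardinal.mk {X : Set (↥Γ → ℕ) | IsSleDownset X} := by
  apply Cardinal.mk_le_of_injective
    (f := fun F => ⟨enc Γ (InvDD Γ F.val), enc_downset Γ _⟩)
  rintro ⟨F₁, Q₁, hQ₁, rfl⟩ ⟨F₂, Q₂, hQ₂, rfl⟩ h
  have he : enc Γ (InvDD Γ (Pol Q₁)) = enc Γ (InvDD Γ (Pol Q₂)) :=
    congrArg Subtype.val h
  have h1 : InvDD Γ (Pol Q₁) ⊆ DD Γ := fun ρ hρ => hρ.1
  have h2 : InvDD Γ (Pol Q₂) ⊆ DD Γ := fun ρ hρ => hρ.1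
  have : Pol (InvDD Γ (Pol Q₁)) = Pol (InvDD Γ (Pol Q₂)) :=
    Set.Subset.antisymm (pol_anti Γ h2 h1 he.ge) (pol_anti Γ h1 h2 he.le)
  have := (pol_invDD Γ hQ₁).symm.trans (this.trans (pol_invDD Γ hQ₂))
  exact Subtype.ext this
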